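/- Let u and v be bit vectors of length L represented by the strictly increasing lists a = (a_1,…,a_s) and b = (b_1,…,b_t) of the positions of their 1-bits. Define a comparator as follows: initialize a flag f = true; for p = 1, 2, …, min(s,t): if a_p > b_p return f, if a_p < b_p return ¬f, otherwise set f := ¬f and continue; after the loop, return ¬f if s > t, return f if t > s, and return false if s = t. Then the comparator returns true if and only if u <_GC v in Gray-code order. -/

import Mathlib

/-- Gray-code order on bit vectors of length `L` (as functions `Fin L → Bool`):
`a <_GC b` iff there is an index `j` such that `a` and `b` agree before `j`,
differ at `j`, and `a j` equals the XOR of the bits of `a` before `j`. -/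
def grayLT {L : ℕ} (a b : Fin L → Bool) : Prop :=
  ∃ j : Fin L, (∀ i, i < j → a i = b i) ∧ a j ≠ b j ∧
    (a j = true ↔ Odd ((Finset.Iio j).filter (fun i => a i = true)).card)

/-- The Gray-code comparator on sparse bit-vector representations (strictly increasing
lists of positions of 1-bits), with a flag `f` initialized to `true`:
at each step compare the current positions, returning `f` if `aₚ > bₚ`,
`¬f` if `aₚ < bₚ`, and flipping `f` otherwise; once one list is exhausted,
return `¬f` if the first list is longer, `f` if the second is longer,
and `false` if they have the same length. -/
def grayComp : List ℕ → List ℕ → Bool → Bool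
  | [], [], _ => false
  | [], _ :: _, f => f
  | _ :: _, [], f => !f
  | x :: xs, y :: ys, f =>
      if y < x then f else if x < y then !f else grayComp xs ys (!f)

lemma comp_self : ∀ (a : List ℕ) (f : Bool), grayComp a a f = false
  | [], _ => rfl
  | x :: xs, f => by simp [grayComp]; exact comp_self xs (!f)

lemma comp_append : ∀ (c a' b' : List ℕ) (f : Bool),
    grayComp (c ++ a') (c ++ b') f = grayComp a' b' (xor (decide (Odd c.length)) f)
  | [], a', b', f => by simp
  | h :: c, a', b', f => by
    have h1 : grayComp ((h :: c) ++ a') ((h :: c) ++ b') f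
        = grayComp (c ++ a') (c ++ b') (!f) := by
      simp [grayComp]
    rw [h1, comp_append c a' b' (!f)]
    congr 1
    have h2 : Odd ((h :: c).length) ↔ ¬ Odd c.length := by
      simp [List.length_cons, Nat.odd_add_one, Nat.not_odd_iff_even]
    rw [decide_eq_decide.mpr h2, decide_not]
    cases decide (Odd c.length) <;> cases f <;> rfl

lemma list_decomp : ∀ (a b : List ℕ), a = b ∨ ∃ c a' b', a = c ++ a' ∧ b = c ++ b' ∧
    ((a' ≠ [] ∧ b' = []) ∨ (a' = [] ∧ b' ≠ []) ∨
      ∃ x xs y ys, a' = x :: xs ∧ b' = y :: ys ∧ x ≠ y)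
  | [], [] => Or.inl rfl
  | [], y :: ys => Or.inr ⟨[], [], y :: ys, rfl, rfl, Or.inr (Or.inl ⟨rfl, by simp⟩)⟩
  | x :: xs, [] => Or.inr ⟨[], x :: xs, [], rfl, rfl, Or.inl ⟨by simp, rfl⟩⟩
  | x :: xs, y :: ys => by
    by_cases hxy : x = y
    · subst hxy
      rcases list_decomp xs ys with h | ⟨c, a', b', h1, h2, h3⟩
      · exact Or.inl (by rw [h])
      · exact Or.inr ⟨x :: c, a', b', by rw [h1]; rfl, by rw [h2]; rfl, h3⟩
    · exact Or.inr ⟨[], x :: xs, y :: ys, rfl, rfl,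
        Or.inr (Or.inr ⟨x, xs, y, ys, rfl, rfl, hxy⟩)⟩

lemma grayLT_iff_first {L : ℕ} (u v : Fin L → Bool) (j : Fin L)
    (hag : ∀ i, i < j → u i = v i) (hd : u j ≠ v j) :
    grayLT u v ↔ (u j = true ↔ Odd ((Finset.Iio j).filter (fun i => u i = true)).card) := by
  constructor
  · rintro ⟨j', h1, h2, h3⟩
    have hjj : j' = j := by
      rcases lt_trichotomy j' j with h | h | h
      · exact absurd (hag j' h) h2
      · exact h
      · exact absurd (h1 j h) hd
    subst hjj; exact h3
  · intro h; exact ⟨j, hag, hd, h⟩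

lemma count_eq {L : ℕ} (u : Fin L → Bool) (j : Fin L) (c : List ℕ) (hc : c.Pairwise (· < ·))
    (hcL : ∀ e ∈ c, e < L)
    (h : ∀ i : Fin L, (u i = true ∧ i < j) ↔ (i : ℕ) ∈ c) :
    ((Finset.Iio j).filter (fun i => u i = true)).card = c.length := by
  rw [← List.toFinset_card_of_nodup hc.nodup]
  refine Finset.card_bij (fun i _ => (i : ℕ)) ?_ ?_ ?_
  · intro i hi
    simp only [Finset.mem_filter, Finset.mem_Iio] at hi
    simpa using (h i).mp ⟨hi.2, hi.1⟩
  · intro i _ i' _ hii; exact Fin.val_injective hii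
  · intro n hn
    simp only [List.mem_toFinset] at hn
    refine ⟨⟨n, hcL n hn⟩, ?_, rfl⟩
    have := (h ⟨n, hcL n hn⟩).mpr (by simpa using hn)
    simp only [Finset.mem_filter, Finset.mem_Iio]
    exact ⟨this.2, this.1⟩

/-- If `u` and `v` are bit vectors of length `L` represented sparsely by the strictly
increasing lists `a` and `b` of the positions of their 1-bits, then the comparator
(started with flag `true`) returns `true` if and only if `u <_GC v`. -/
theorem grayComp_iff_grayLT (L : ℕ) (u v : Fin L → Bool) (a b : List ℕ)
    (ha : a.Pairwise (· < ·)) (hb : b.Pairwise (· < ·))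
    (haL : ∀ x ∈ a, x < L) (hbL : ∀ x ∈ b, x < L)
    (hua : ∀ i : Fin L, u i = true ↔ (i : ℕ) ∈ a)
    (hvb : ∀ i : Fin L, v i = true ↔ (i : ℕ) ∈ b) :
    grayComp a b true = true ↔ grayLT u v := by
  rcases list_decomp a b with rfl | ⟨c, a', b', rfl, rfl, hcase⟩
  · -- a = b: comparator returns false and grayLT fails
    rw [comp_self]
    simp only [Bool.false_eq_true, false_iff]
    rintro ⟨j, _, h2, _⟩
    exact h2 (Bool.eq_iff_iff.mpr ((hua j).trans (hvb j).symm))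
  · obtain ⟨hc, ha', hcross⟩ := List.pairwise_append.mp ha
    obtain ⟨_, hb', hcrossb⟩ := List.pairwise_append.mp hb
    have hcL : ∀ e ∈ c, e < L := fun e he => haL e (List.mem_append_left _ he)
    rcases hcase with ⟨hane, rfl⟩ | ⟨rfl, hbne⟩ | ⟨x, xs, y, ys, rfl, rfl, hxy⟩
    · -- b' = [], a' = x :: xs
      obtain ⟨x, xs, rfl⟩ : ∃ x xs, a' = x :: xs := by
        cases a' with
        | nil => exact absurd rfl hane
        | cons x xs => exact ⟨x, xs, rfl⟩
      have hxL : x < L := haL x (by simp)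
      set j : Fin L := ⟨x, hxL⟩ with hj
      have hjv : (j : ℕ) = x := rfl
      have hxlt : ∀ e ∈ xs, x < e := fun e he => (List.pairwise_cons.mp ha').1 e he
      have hclt : ∀ e ∈ c, e < x := fun e he => hcross e he x (by simp)
      have key : ∀ i : Fin L, (u i = true ∧ i < j) ↔ (i : ℕ) ∈ c := by
        intro i
        rw [hua i, Fin.lt_def]
        constructor
        · rintro ⟨hi, hij⟩
          rcases List.mem_append.mp hi with h | h
          · exact h
          · rcases List.mem_cons.mp h with h | h
            · omega
            · exact absurd hij (by have := hxlt _ h; omega)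
        · intro hic
          exact ⟨List.mem_append_left _ hic, hclt _ hic⟩
      have huj : u j = true := (hua j).mpr (by simp [hj])
      have hvj : v j = false := by
        rw [← Bool.not_eq_true, hvb j]
        intro hmem
        rcases List.mem_append.mp hmem with h | h
        · exact absurd (hclt _ h) (by simp [hj])
        · simp at h
      have hag : ∀ i, i < j → u i = v i := by
        intro i hij
        rw [Bool.eq_iff_iff, hvb i]
        have : u i = true ↔ (i : ℕ) ∈ c := by
          constructor
          · intro h; exact (key i).mp ⟨h, hij⟩
          · intro h; exact ((key i).mpr h).1
        rw [this]; simp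
      have hd : u j ≠ v j := by rw [huj, hvj]; simp
      rw [comp_append, grayLT_iff_first u v j hag hd, count_eq u j c hc hcL key, huj]
      simp [grayComp]
    · -- a' = [], b' = y :: ys
      obtain ⟨y, ys, rfl⟩ : ∃ y ys, b' = y :: ys := by
        cases b' with
        | nil => exact absurd rfl hbne
        | cons y ys => exact ⟨y, ys, rfl⟩
      have hyL : y < L := hbL y (by simp)
      set j : Fin L := ⟨y, hyL⟩ with hj
      have hjv : (j : ℕ) = y := rfl
      have hylt : ∀ e ∈ ys, y < e := fun e he => (List.pairwise_cons.mp hb').1 e he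
      have hclt : ∀ e ∈ c, e < y := fun e he => hcrossb e he y (by simp)
      have key : ∀ i : Fin L, (u i = true ∧ i < j) ↔ (i : ℕ) ∈ c := by
        intro i
        rw [hua i, Fin.lt_def]
        constructor
        · rintro ⟨hi, _⟩; simpa using hi
        · intro hic
          exact ⟨by simpa using hic, hclt _ hic⟩
      have huj : u j = false := by
        rw [← Bool.not_eq_true, hua j]
        intro hmem
        have : (j : ℕ) ∈ c := by simpa using hmem
        exact absurd (hclt _ this) (by simp [hj])
      have hvj : v j = true := (hvb j).mpr (by simp [hj])
      have hag : ∀ i, i < j → u i = v i := by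
        intro i hij
        rw [Bool.eq_iff_iff, hua i, hvb i, Fin.lt_def] at *
        simp only [List.mem_append, List.mem_cons]
        constructor
        · intro h; exact Or.inl (by simpa using h)
        · rintro (h | h)
          · exact Or.inl h
          · rcases h with h | h
            · omega
            · have := hylt _ h; omega
      have hd : u j ≠ v j := by rw [huj, hvj]; simp
      rw [comp_append, grayLT_iff_first u v j hag hd, count_eq u j c hc hcL key, huj]
      simp [grayComp, Nat.not_odd_iff_even]
    · -- a' = x :: xs, b' = y :: ys, x ≠ y
      have hxL : x < L := haL x (by simp)
      have hyL : y < L := hbL y (by simp)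
      have hxlt : ∀ e ∈ xs, x < e := fun e he => (List.pairwise_cons.mp ha').1 e he
      have hylt : ∀ e ∈ ys, y < e := fun e he => (List.pairwise_cons.mp hb').1 e he
      have hcltx : ∀ e ∈ c, e < x := fun e he => hcross e he x (by simp)
      have hclty : ∀ e ∈ c, e < y := fun e he => hcrossb e he y (by simp)
      rcases Nat.lt_or_gt_of_ne hxy with hlt | hlt
      · -- x < y
        set j : Fin L := ⟨x, hxL⟩ with hj
        have hjv : (j : ℕ) = x := rfl
        have key : ∀ i : Fin L, (u i = true ∧ i < j) ↔ (i : ℕ) ∈ c := by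
          intro i
          rw [hua i, Fin.lt_def]
          constructor
          · rintro ⟨hi, hij⟩
            rcases List.mem_append.mp hi with h | h
            · exact h
            · rcases List.mem_cons.mp h with h | h
              · omega
              · have := hxlt _ h; omega
          · intro hic
            exact ⟨List.mem_append_left _ hic, hcltx _ hic⟩
        have huj : u j = true := (hua j).mpr (by simp [hj])
        have hvj : v j = false := by
          rw [← Bool.not_eq_true, hvb j]
          intro hmem
          rcases List.mem_append.mp hmem with h | h
          · exact absurd (hcltx _ h) (by simp [hj])
          · rcases List.mem_cons.mp h with h | h
            · simp [hj] at h; omega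
            · have := hylt _ h; simp [hj] at this ⊢; omega
        have hag : ∀ i, i < j → u i = v i := by
          intro i hij
          rw [Fin.lt_def] at hij
          rw [Bool.eq_iff_iff, hvb i]
          have hu : u i = true ↔ (i : ℕ) ∈ c := by
            constructor
            · intro h; exact (key i).mp ⟨h, by rwa [Fin.lt_def]⟩
            · intro h; exact ((key i).mpr h).1
          rw [hu]
          simp only [List.mem_append, List.mem_cons]
          constructor
          · exact Or.inl
          · rintro (h | h | h)
            · exact h
            · omega
            · have := hylt _ h; omega
        have hd : u j ≠ v j := by rw [huj, hvj]; simp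
        rw [comp_append, grayLT_iff_first u v j hag hd, count_eq u j c hc hcL key, huj]
        have : ¬ (y < x) := by omega
        simp [grayComp, this, hlt]
      · -- y < x
        set j : Fin L := ⟨y, hyL⟩ with hj
        have hjv : (j : ℕ) = y := rfl
        have key : ∀ i : Fin L, (u i = true ∧ i < j) ↔ (i : ℕ) ∈ c := by
          intro i
          rw [hua i, Fin.lt_def]
          constructor
          · rintro ⟨hi, hij⟩
            rcases List.mem_append.mp hi with h | h
            · exact h
            · rcases List.mem_cons.mp h with h | h
              · simp [hj] at hij; omega
              · have := hxlt _ h; simp [hj] at hij; omega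
          · intro hic
            exact ⟨List.mem_append_left _ hic, hclty _ hic⟩
        have huj : u j = false := by
          rw [← Bool.not_eq_true, hua j]
          intro hmem
          rcases List.mem_append.mp hmem with h | h
          · exact absurd (hclty _ h) (by simp [hj])
          · rcases List.mem_cons.mp h with h | h
            · simp [hj] at h; omega
            · have := hxlt _ h; simp [hj] at this ⊢; omega
        have hvj : v j = true := (hvb j).mpr (by simp [hj])
        have hag : ∀ i, i < j → u i = v i := by
          intro i hij
          rw [Fin.lt_def] at hij
          rw [Bool.eq_iff_iff, hvb i]
          have hu : u i = true ↔ (i : ℕ) ∈ c := by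
            constructor
            · intro h; exact (key i).mp ⟨h, by rwa [Fin.lt_def]⟩
            · intro h; exact ((key i).mpr h).1
          rw [hu]
          simp only [List.mem_append, List.mem_cons]
          constructor
          · exact Or.inl
          · rintro (h | h | h)
            · exact h
            · omega
            · have := hylt _ h; omega
        have hd : u j ≠ v j := by rw [huj, hvj]; simp
        rw [comp_append, grayLT_iff_first u v j hag hd, count_eq u j c hc hcL key, huj]
        simp [grayComp, hlt, Nat.not_odd_iff_even]
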